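/- Let R ⊆ S be a standard extension of finite valuation rings of degree n, with R having parameters q, ℓ. The number of y ∈ S with Tr(y) = 1 equals q^{(n-1)ℓ}, and every such y is a unit of S. The number of units y ∈ S^× with Tr(y) = 0 equals q^{(n-1)ℓ} - q^{(n-1)(ℓ-1)}. -/

import Mathlib

open Finset

section Chain
variable {A : Type*} [CommRing A] [IsLocalRing A]

lemma chain_mem_span_of_pow_mul_eq_zero (π : A)
    (hπ : IsLocalRing.maximalIdeal A = Ideal.span {π})
    (ℓ : ℕ) (h1 : π ^ (ℓ - 1) ≠ 0) :
    ∀ t ≤ ℓ, ∀ r : A, π ^ (ℓ - t) * r = 0 → r ∈ Ideal.span {π ^ t} := by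
  intro t
  induction t with
  | zero =>
    intro _ r _
    simpa using Submodule.mem_top (R := A) (x := r)
  | succ t ih =>
    intro ht r hr
    have h2 : π ^ (ℓ - t) * r = 0 := by
      have he : ℓ - t = 1 + (ℓ - (t + 1)) := by omega
      rw [he, pow_add, mul_assoc, hr, mul_zero]
    obtain ⟨s, hs⟩ := Ideal.mem_span_singleton'.mp (ih (by omega) r h2)
    have hs0 : π ^ (ℓ - 1) * s = 0 := by
      have he : ℓ - 1 = (ℓ - (t + 1)) + t := by omega
      calc π ^ (ℓ - 1) * s = π ^ (ℓ - (t+1)) * (s * π ^ t) := by rw [he, pow_add]; ring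
      _ = 0 := by rw [hs, hr]
    have hsm : s ∈ Ideal.span {π} := by
      rw [← hπ]
      by_contra h
      have hu : IsUnit s := by
        by_contra hu
        exact h (IsLocalRing.mem_maximalIdeal s |>.mpr hu)
      obtain ⟨u, rfl⟩ := hu
      apply h1
      calc π ^ (ℓ - 1) = π ^ (ℓ - 1) * u * (u⁻¹ : Aˣ) := by
            rw [mul_assoc, ← Units.val_mul, mul_inv_cancel, Units.val_one, mul_one]
      _ = 0 := by rw [hs0, zero_mul]
    obtain ⟨c, hc⟩ := Ideal.mem_span_singleton'.mp hsm
    exact Ideal.mem_span_singleton'.mpr ⟨c, by rw [← hs, ← hc, pow_succ]; ring⟩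

lemma chain_card_quot [Fintype A] (π : A)
    (hπ : IsLocalRing.maximalIdeal A = Ideal.span {π})
    (ℓ : ℕ) (h1 : π ^ (ℓ - 1) ≠ 0) :
    ∀ j ≤ ℓ, Nat.card (A ⧸ Ideal.span {π ^ j}) =
      Nat.card (A ⧸ Ideal.span {π}) ^ j := by
  intro j
  induction j with
  | zero =>
    intro _
    have htop : Ideal.span {π ^ 0} = (⊤ : Ideal A) := by
      simp [Ideal.span_singleton_one]
    haveI : Subsingleton (A ⧸ Ideal.span {π ^ 0}) := by
      rw [Submodule.Quotient.subsingleton_iff]; exact htop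
    rw [Nat.card_of_subsingleton ((0 : A ⧸ Ideal.span {π ^ 0})), pow_zero]
  | succ j ih =>
    intro hj
    set I : Ideal A := Ideal.span {π ^ (j+1)} with hI
    set J : Ideal A := Ideal.span {π ^ j} with hJ
    have hIJ : I ≤ J := by
      rw [hI, hJ, Ideal.span_singleton_le_span_singleton]
      exact ⟨π, pow_succ π j⟩
    -- the factor map
    let ψ : (A ⧸ I) →ₗ[A] (A ⧸ J) := Submodule.mapQ I J LinearMap.id hIJ
    have hψ_mk : ∀ x : A, ψ (Submodule.Quotient.mk x) = Submodule.Quotient.mk x := by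
      intro x; rfl
    have hψ_surj : Function.Surjective ψ := by
      intro y
      obtain ⟨x, rfl⟩ := Submodule.Quotient.mk_surjective J y
      exact ⟨Submodule.Quotient.mk x, hψ_mk x⟩
    -- the map μ : A → A ⧸ I, x ↦ [π^j * x]
    let μ : A →ₗ[A] (A ⧸ I) := I.mkQ.comp (LinearMap.toSpanSingleton A A (π ^ j))
    have hμ_apply : ∀ x : A, μ x = Submodule.Quotient.mk (x • π ^ j) := fun x => rfl
    have hker_ψ : LinearMap.ker ψ = LinearMap.range μ := by
      ext y
      constructor
      · intro hy
        obtain ⟨x, rfl⟩ := Submodule.Quotient.mk_surjective I y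
        rw [LinearMap.mem_ker, hψ_mk] at hy
        have hx : x ∈ J := (Submodule.Quotient.mk_eq_zero J).mp hy
        obtain ⟨c, hc⟩ := Ideal.mem_span_singleton'.mp hx
        exact ⟨c, by rw [hμ_apply, smul_eq_mul, hc]⟩
      · rintro ⟨c, rfl⟩
        rw [LinearMap.mem_ker, hμ_apply, hψ_mk]
        rw [Submodule.Quotient.mk_eq_zero]
        exact Ideal.mem_span_singleton'.mpr ⟨c, by rw [smul_eq_mul]⟩
    have hker_μ : LinearMap.ker μ = Ideal.span {π} := by
      ext x
      constructor
      · intro hx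
        rw [LinearMap.mem_ker, hμ_apply, Submodule.Quotient.mk_eq_zero] at hx
        obtain ⟨c, hc⟩ := Ideal.mem_span_singleton'.mp hx
        rw [smul_eq_mul] at hc
        have h0 : π ^ j * (x - π * c) = 0 := by linear_combination -hc
        have h0' : π ^ (ℓ - (ℓ - j)) * (x - π * c) = 0 := by
          rw [show ℓ - (ℓ - j) = j by omega]; exact h0
        have hmem := chain_mem_span_of_pow_mul_eq_zero π hπ ℓ h1 (ℓ - j)
          (by omega) (x - π * c) h0'
        have hle : Ideal.span {π ^ (ℓ - j)} ≤ Ideal.span ({π} : Set A) := by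
          rw [Ideal.span_singleton_le_span_singleton]
          exact dvd_pow_self π (by omega : ℓ - j ≠ 0)
        have : x - π * c ∈ Ideal.span ({π} : Set A) := hle hmem
        have hπc : π * c ∈ Ideal.span ({π} : Set A) :=
          Ideal.mem_span_singleton'.mpr ⟨c, by ring⟩
        simpa using add_mem this hπc
      · intro hx
        obtain ⟨c, hc⟩ := Ideal.mem_span_singleton'.mp hx
        rw [LinearMap.mem_ker, hμ_apply, Submodule.Quotient.mk_eq_zero]
        exact Ideal.mem_span_singleton'.mpr ⟨c, by rw [smul_eq_mul, ← hc, pow_succ]; ring⟩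
    have e1 : Nat.card (A ⧸ I) =
        Nat.card (LinearMap.ker ψ) * Nat.card ((A ⧸ I) ⧸ LinearMap.ker ψ) :=
      Submodule.card_eq_card_quotient_mul_card _
    have e2 : Nat.card ((A ⧸ I) ⧸ LinearMap.ker ψ) = Nat.card (A ⧸ J) :=
      Nat.card_congr (LinearMap.quotKerEquivOfSurjective ψ hψ_surj).toEquiv
    have e3 : Nat.card (LinearMap.ker ψ) = Nat.card (A ⧸ Ideal.span {π}) := by
      rw [hker_ψ]
      have := Nat.card_congr (LinearMap.quotKerEquivRange μ).toEquiv
      rw [← this, hker_μ]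
    rw [e1, e2, e3, ih (by omega), pow_succ]
    ring
lemma chain_card [Fintype A] (π : A)
    (hπ : IsLocalRing.maximalIdeal A = Ideal.span {π})
    (ℓ : ℕ) (h0 : π ^ ℓ = 0) (h1 : π ^ (ℓ - 1) ≠ 0) :
    Nat.card A = Nat.card (A ⧸ Ideal.span {π}) ^ ℓ := by
  have hbot : Ideal.span {π ^ ℓ} = (⊥ : Ideal A) := by
    rw [h0, Ideal.span_singleton_eq_bot]
  have e : Nat.card (A ⧸ Ideal.span {π ^ ℓ}) = Nat.card A := by
    refine Nat.card_congr ?_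
    refine (Submodule.quotEquivOfEqBot _ hbot).toEquiv
  rw [← e, chain_card_quot π hπ ℓ h1 ℓ le_rfl]

lemma chain_card_span [Fintype A] (π : A)
    (hπ : IsLocalRing.maximalIdeal A = Ideal.span {π})
    (ℓ : ℕ) (h0 : π ^ ℓ = 0) (h1 : π ^ (ℓ - 1) ≠ 0)
    (k : ℕ) (hk : k ≤ ℓ) :
    Nat.card (Ideal.span {π ^ k} : Ideal A) =
      Nat.card (A ⧸ Ideal.span {π}) ^ (ℓ - k) := by
  let μ : A →ₗ[A] A := LinearMap.toSpanSingleton A A (π ^ k)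
  have hrange : LinearMap.range μ = Ideal.span {π ^ k} := by
    exact (LinearMap.span_singleton_eq_range A A (π ^ k)).symm
  have hker : LinearMap.ker μ = Ideal.span {π ^ (ℓ - k)} := by
    ext x
    constructor
    · intro hx
      have hx' : π ^ (ℓ - (ℓ - k)) * x = 0 := by
        rw [show ℓ - (ℓ - k) = k by omega]
        have : x • π ^ k = 0 := hx
        rw [smul_eq_mul] at this
        linear_combination this
      exact chain_mem_span_of_pow_mul_eq_zero π hπ ℓ h1 (ℓ - k) (by omega) x hx'
    · intro hx
      obtain ⟨c, hc⟩ := Ideal.mem_span_singleton'.mp hx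
      have : x • π ^ k = 0 := by
        rw [smul_eq_mul, ← hc, mul_assoc, ← pow_add, show ℓ - k + k = ℓ by omega, h0,
          mul_zero]
      exact this
  have e : Nat.card (Ideal.span {π ^ k} : Ideal A) =
      Nat.card (A ⧸ Ideal.span {π ^ (ℓ - k)}) := by
    rw [← hrange, ← hker]
    exact (Nat.card_congr (LinearMap.quotKerEquivRange μ).toEquiv).symm
  rw [e, chain_card_quot π hπ ℓ h1 (ℓ - k) (by omega)]

end Chain


theorem counts_trace_standard_extension
    (R : Type*) [CommRing R] [Fintype R] [IsLocalRing R] [IsPrincipalIdealRing R]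
    (π : R) (hπ : IsLocalRing.maximalIdeal R = Ideal.span {π})
    (q ℓ : ℕ) (hq : Nat.card (IsLocalRing.ResidueField R) = q)
    (hℓpos : 0 < ℓ) (hnil : π ^ ℓ = 0) (hmin : ∀ m, 0 < m → m < ℓ → π ^ m ≠ 0)
    (f : Polynomial R) (hf : f.Monic)
    (hirr : Irreducible
      (f.map (Ideal.Quotient.mk (IsLocalRing.maximalIdeal R))))
    (n : ℕ) (hn : f.natDegree = n) :
    Nat.card {y : AdjoinRoot f // Algebra.trace R (AdjoinRoot f) y = 1} =
        q ^ ((n - 1) * ℓ) ∧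
      (∀ y : AdjoinRoot f, Algebra.trace R (AdjoinRoot f) y = 1 → IsUnit y) ∧
      Nat.card {y : (AdjoinRoot f)ˣ // Algebra.trace R (AdjoinRoot f) (y : AdjoinRoot f) = 0} =
        q ^ ((n - 1) * ℓ) - q ^ ((n - 1) * (ℓ - 1)) := by
  classical
  set S := AdjoinRoot f with hS
  set k := IsLocalRing.ResidueField R with hk
  set fbar : Polynomial k := f.map (Ideal.Quotient.mk (IsLocalRing.maximalIdeal R)) with hfbar
  set K := AdjoinRoot fbar with hK
  haveI : Fact (Irreducible fbar) := ⟨hirr⟩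
  have hfbar_monic : fbar.Monic := hf.map _
  have hfbar_deg : fbar.natDegree = n := by rw [hfbar]; exact (hf.natDegree_map _).trans hn
  have hn1 : 0 < n := by rw [← hfbar_deg]; exact hirr.natDegree_pos
  -- the nontrivial power
  have hπpow : π ^ (ℓ - 1) ≠ 0 := by
    rcases Nat.eq_or_lt_of_le hℓpos with h | h
    · simpa [← h] using one_ne_zero
    · exact hmin (ℓ - 1) (by omega) (by omega)
  -- cardinality of R
  have hcardk : Nat.card (R ⧸ Ideal.span {π}) = q := by
    rw [← hq]
    exact Nat.card_congr (Ideal.quotEquivOfEq hπ.symm).toEquiv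
  have hcardR : Nat.card R = q ^ ℓ := by
    rw [chain_card π hπ ℓ hnil hπpow, hcardk]
  -- basis of S over R
  let P : PowerBasis R S := AdjoinRoot.powerBasis' hf
  let b : Module.Basis (Fin f.natDegree) R S := P.basis
  haveI : Fintype S := Fintype.ofEquiv _ b.equivFun.toEquiv.symm
  have hcardS : Nat.card S = q ^ (n * ℓ) := by
    have := Nat.card_congr b.equivFun.toEquiv
    rw [this, Nat.card_pi, Finset.prod_const, Finset.card_univ, Fintype.card_fin, hn,
      hcardR, ← pow_mul, mul_comm ℓ n]
  -- injectivity of the algebra map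
  have hinj : Function.Injective (algebraMap R S) := by
    let i0 : Fin f.natDegree := ⟨0, hn ▸ hn1⟩
    intro r r' h
    have h1 : (algebraMap R S) (r - r') = 0 := by rw [map_sub, h, sub_self]
    have h2 : (r - r') • b i0 = 0 := by
      have hb1 : b i0 = 1 := by
        have hcoe : ((i0 : Fin f.natDegree) : ℕ) = 0 := rfl
        rw [show b i0 = P.gen ^ ((i0 : Fin f.natDegree) : ℕ) from P.basis_eq_pow i0,
          hcoe, pow_zero]
      rw [hb1, ← Algebra.algebraMap_eq_smul_one, h1]
    have h3 := congrArg (fun z => b.repr z) h2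
    simp only [map_smul, Module.Basis.repr_self, map_zero] at h3
    have h4 := congrArg (fun g : Fin f.natDegree →₀ R => g i0) h3
    simp only [Finsupp.smul_apply, Finsupp.single_eq_same, smul_eq_mul, mul_one,
      Finsupp.coe_zero, Pi.zero_apply] at h4
    exact sub_eq_zero.mp h4
  -- local structure of S
  set πS : S := algebraMap R S π with hπS
  have hπS_pow : ∀ m : ℕ, πS ^ m = algebraMap R S (π ^ m) := fun m => (map_pow _ _ _).symm
  have hπS_nil : πS ^ ℓ = 0 := by rw [hπS_pow, hnil, map_zero]
  have hπS_pow_ne : πS ^ (ℓ - 1) ≠ 0 := by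
    rw [hπS_pow]
    intro h
    exact hπpow (hinj (h.trans (map_zero (algebraMap R S)).symm))
  have hmap_m : (IsLocalRing.maximalIdeal R).map (AdjoinRoot.of f) = Ideal.span {πS} := by
    rw [hπ, Ideal.map_span, Set.image_singleton, hπS, AdjoinRoot.algebraMap_eq]
  let e0 := AdjoinRoot.quotAdjoinRootEquivQuotPolynomialQuot (IsLocalRing.maximalIdeal R) f
  let e : (S ⧸ Ideal.span {πS}) ≃+* K :=
    (Ideal.quotEquivOfEq hmap_m.symm).trans e0
  have hKfield : IsField K := Field.toIsField K
  have hSresfield : IsField (S ⧸ Ideal.span {πS}) :=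
    MulEquiv.isField hKfield e.toMulEquiv
  have hπS_max : (Ideal.span {πS}).IsMaximal :=
    Ideal.Quotient.maximal_of_isField _ hSresfield
  have hnonunit_iff : ∀ y : S, ¬ IsUnit y ↔ y ∈ Ideal.span {πS} := by
    intro y
    constructor
    · intro hy
      obtain ⟨M, hM, hyM⟩ := exists_max_ideal_of_mem_nonunits hy
      have hπSM : πS ∈ M := by
        have : πS ^ ℓ ∈ M := by rw [hπS_nil]; exact M.zero_mem
        exact hM.isPrime.mem_of_pow_mem ℓ this
      have hle : Ideal.span {πS} ≤ M := by
        rw [Ideal.span_singleton_le_iff_mem]; exact hπSM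
      rwa [hπS_max.eq_of_le hM.ne_top hle]
    · intro hy hu
      exact hπS_max.ne_top (Ideal.eq_top_of_isUnit_mem _ hy hu)
  haveI : Nontrivial S := by
    refine ⟨0, 1, fun h01 => ?_⟩
    exact one_ne_zero (hinj (show algebraMap R S 1 = algebraMap R S 0 by
      rw [map_one, map_zero, h01.symm]))
  haveI : IsLocalRing S := by
    apply IsLocalRing.of_nonunits_add
    intro a b ha hb
    have ha' : a ∈ Ideal.span {πS} := (hnonunit_iff a).mp ha
    have hb' : b ∈ Ideal.span {πS} := (hnonunit_iff b).mp hb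
    exact (hnonunit_iff _).mpr (add_mem ha' hb')
  -- the reduction homomorphism φ : S → K
  let ρ : R →+* k := IsLocalRing.residue R
  have hρ_surj : Function.Surjective ρ := Ideal.Quotient.mk_surjective
  have hroot : f.eval₂ ((AdjoinRoot.of fbar).comp ρ) (AdjoinRoot.root fbar) = 0 := by
    rw [← Polynomial.eval₂_map]
    exact AdjoinRoot.eval₂_root fbar
  let φ : S →+* K := AdjoinRoot.lift ((AdjoinRoot.of fbar).comp ρ) (AdjoinRoot.root fbar) hroot
  have hφ_of : ∀ r : R, φ (AdjoinRoot.of f r) = AdjoinRoot.of fbar (ρ r) := fun r =>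
    AdjoinRoot.lift_of hroot
  have hφ_root : φ (AdjoinRoot.root f) = AdjoinRoot.root fbar := AdjoinRoot.lift_root hroot
  have hφ_smul : ∀ (r : R) (s : S), φ (r • s) = ρ r • φ s := by
    intro r s
    rw [Algebra.smul_def, AdjoinRoot.algebraMap_eq, map_mul, hφ_of, Algebra.smul_def,
      AdjoinRoot.algebraMap_eq]
  have hφ_mk : ∀ p : Polynomial R, φ (AdjoinRoot.mk f p) = AdjoinRoot.mk fbar (p.map ρ) := by
    intro p
    rw [show φ (AdjoinRoot.mk f p) = p.eval₂ ((AdjoinRoot.of fbar).comp ρ)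
        (AdjoinRoot.root fbar) from AdjoinRoot.lift_mk hroot p,
      ← Polynomial.eval₂_map, ← AdjoinRoot.algebraMap_eq, ← Polynomial.aeval_def,
      AdjoinRoot.aeval_eq]
  have hφ_surj : Function.Surjective φ := by
    intro z
    obtain ⟨p, rfl⟩ := AdjoinRoot.mk_surjective z
    obtain ⟨p', rfl⟩ := Polynomial.map_surjective ρ hρ_surj p
    exact ⟨AdjoinRoot.mk f p', hφ_mk p'⟩
  -- power basis on K
  let Pk : PowerBasis k K := AdjoinRoot.powerBasis hirr.ne_zero
  have hPk_dim : Pk.dim = f.natDegree := by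
    show fbar.natDegree = f.natDegree
    rw [hfbar_deg, hn]
  let b' : Module.Basis (Fin f.natDegree) k K := Pk.basis.reindex (finCongr hPk_dim)
  have hb'_eq : ∀ i : Fin f.natDegree, b' i = AdjoinRoot.root fbar ^ (i : ℕ) := by
    intro i
    rw [Module.Basis.reindex_apply, Pk.basis_eq_pow]
    congr 1
  have hφ_b : ∀ i : Fin f.natDegree, φ (b i) = b' i := by
    intro i
    rw [show b i = P.gen ^ (i : ℕ) from P.basis_eq_pow i, map_pow, hb'_eq]
    exact congrArg (· ^ (i : ℕ)) hφ_root
  -- semilinear comparison of coordinates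
  let L1 : S →ₛₗ[ρ] (Fin f.natDegree → k) :=
    { toFun := fun s i => ρ (b.repr s i)
      map_add' := by intro s t; funext i; simp
      map_smul' := by intro r s; funext i; simp }
  let L2 : S →ₛₗ[ρ] (Fin f.natDegree → k) :=
    { toFun := fun s i => b'.repr (φ s) i
      map_add' := by
        intro s t; funext i
        show b'.repr (φ (s + t)) i = b'.repr (φ s) i + b'.repr (φ t) i
        rw [map_add φ, b'.repr.map_add, Finsupp.add_apply]
      map_smul' := by
        intro r s; funext i
        show b'.repr (φ (r • s)) i = ρ r • b'.repr (φ s) i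
        rw [hφ_smul, b'.repr.map_smul, Finsupp.smul_apply] }
  have hL : L1 = L2 := by
    apply b.ext
    intro j
    funext i
    show ρ (b.repr (b j) i) = b'.repr (φ (b j)) i
    rw [hφ_b j, Module.Basis.repr_self, Module.Basis.repr_self]
    by_cases h : j = i
    · subst h; simp
    · rw [Finsupp.single_eq_of_ne' h, Finsupp.single_eq_of_ne' h, map_zero]
  have hL_apply : ∀ (s : S) (i : Fin f.natDegree), ρ (b.repr s i) = b'.repr (φ s) i := by
    intro s i
    exact congrFun (congrArg (fun T => T s) (congrArg DFunLike.coe hL)) i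
  -- trace compatibility
  have htr : ∀ y : S, ρ (Algebra.trace R S y) = Algebra.trace k K (φ y) := by
    intro y
    rw [Algebra.trace_eq_matrix_trace b y, Algebra.trace_eq_matrix_trace b' (φ y),
      Matrix.trace, Matrix.trace, map_sum]
    refine Finset.sum_congr rfl (fun i _ => ?_)
    rw [Matrix.diag_apply, Matrix.diag_apply, Algebra.leftMulMatrix_eq_repr_mul,
      Algebra.leftMulMatrix_eq_repr_mul, hL_apply, map_mul, hφ_b]
  -- surjectivity of the trace of K/k and of S/R
  haveI : Finite k := Finite.of_surjective (⇑ρ) hρ_surj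
  haveI : Module.Finite k K := Pk.finite
  haveI : Algebra.IsAlgebraic k K := Algebra.IsAlgebraic.of_finite k K
  haveI : PerfectField k := PerfectField.ofFinite
  haveI : Algebra.IsSeparable k K := inferInstance
  have htrK_surj : Function.Surjective (Algebra.trace k K) := Algebra.trace_surjective k K
  obtain ⟨z, hz⟩ := htrK_surj 1
  obtain ⟨y₁, rfl⟩ := hφ_surj z
  have h1 : ρ (Algebra.trace R S y₁) = 1 := by rw [htr]; exact hz
  have hu : IsUnit (Algebra.trace R S y₁) := by
    apply isUnit_of_map_unit ρ
    rw [h1]; exact isUnit_one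
  obtain ⟨u, hu_eq⟩ := hu
  set y₀ : S := ((u⁻¹ : Rˣ) : R) • y₁ with hy₀def
  have hy₀ : Algebra.trace R S y₀ = 1 := by
    rw [hy₀def, map_smul, ← hu_eq, smul_eq_mul, Units.inv_mul]
  have htr_surj : Function.Surjective (Algebra.trace R S) := by
    intro r
    exact ⟨r • y₀, by rw [map_smul, hy₀, smul_eq_mul, mul_one]⟩
  -- every element of trace 1 is a unit
  have hunit : ∀ y : S, Algebra.trace R S y = 1 → IsUnit y := by
    intro y hy
    by_contra hny
    obtain ⟨c, hc⟩ := Ideal.mem_span_singleton'.mp ((hnonunit_iff y).mp hny)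
    have hsm : c * πS = π • c := by rw [Algebra.smul_def, hπS]; ring
    have h2 : (1 : R) = π * Algebra.trace R S c := by
      rw [← hy, ← hc, hsm, map_smul, smul_eq_mul]
    have hπu : IsUnit π := IsUnit.of_mul_eq_one _ h2.symm
    have h3 := hπu.pow ℓ
    rw [hnil] at h3
    exact one_ne_zero (isUnit_zero_iff.mp h3).symm
  -- cardinality of the kernel of the trace
  have hq0 : 0 < q := by rw [← hq]; exact Nat.card_pos
  have e1 : Nat.card S =
      Nat.card (LinearMap.ker (Algebra.trace R S)) * Nat.card R := by
    rw [Submodule.card_eq_card_quotient_mul_card (LinearMap.ker (Algebra.trace R S))]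
    congr 1
    exact Nat.card_congr (LinearMap.quotKerEquivOfSurjective _ htr_surj).toEquiv
  have hkcard : Nat.card (LinearMap.ker (Algebra.trace R S)) = q ^ ((n - 1) * ℓ) := by
    have hexp : (n - 1) * ℓ + ℓ = n * ℓ := by
      cases n with
      | zero => omega
      | succ m => simp [Nat.succ_sub_one, Nat.succ_mul]
    have h4 : Nat.card (LinearMap.ker (Algebra.trace R S)) * q ^ ℓ =
        q ^ ((n - 1) * ℓ) * q ^ ℓ :=
      calc Nat.card (LinearMap.ker (Algebra.trace R S)) * q ^ ℓ
          = Nat.card (LinearMap.ker (Algebra.trace R S)) * Nat.card R := by rw [hcardR]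
        _ = Nat.card S := e1.symm
        _ = q ^ (n * ℓ) := hcardS
        _ = q ^ ((n - 1) * ℓ + ℓ) := by rw [hexp]
        _ = q ^ ((n - 1) * ℓ) * q ^ ℓ := pow_add q _ _
    exact Nat.eq_of_mul_eq_mul_right (Nat.pow_pos (n := ℓ) hq0) h4
  -- first count
  have hfirst : Nat.card {y : S // Algebra.trace R S y = 1} = q ^ ((n - 1) * ℓ) := by
    rw [← hkcard]
    apply Nat.card_congr
    refine
      { toFun := fun y => ⟨y.1 - y₀, LinearMap.mem_ker.mpr (by rw [map_sub, y.2, hy₀, sub_self])⟩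
        invFun := fun z => ⟨z.1 + y₀, by rw [map_add, LinearMap.mem_ker.mp z.2, hy₀, zero_add]⟩
        left_inv := fun y => by ext; simp
        right_inv := fun z => by ext; simp }
  -- cardinalities for the ideal generated by πS
  have hmaxS : IsLocalRing.maximalIdeal S = Ideal.span {πS} :=
    (IsLocalRing.eq_maximalIdeal hπS_max).symm
  have hcardK : Nat.card K = q ^ n := by
    rw [Nat.card_congr b'.equivFun.toEquiv, Nat.card_pi, Finset.prod_const,
      Finset.card_univ, Fintype.card_fin, hq, hn]
  have hcardResS : Nat.card (S ⧸ Ideal.span {πS}) = q ^ n := by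
    rw [Nat.card_congr e.toEquiv, hcardK]
  have hcardSpanS : Nat.card (Ideal.span {πS} : Ideal S) = q ^ (n * (ℓ - 1)) := by
    have h5 := chain_card_span πS hmaxS ℓ hπS_nil hπS_pow_ne 1 hℓpos
    rw [pow_one] at h5
    rw [h5, hcardResS, ← pow_mul]
  have hcardSpanR : Nat.card (Ideal.span {π} : Ideal R) = q ^ (ℓ - 1) := by
    have h5 := chain_card_span π hπ ℓ hnil hπpow 1 hℓpos
    rw [pow_one] at h5
    rw [h5, hcardk]
  -- restriction of the trace to πS
  set J : Submodule R S := Submodule.restrictScalars R (Ideal.span {πS}) with hJdef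
  set Tr' : J →ₗ[R] R := (Algebra.trace R S).domRestrict J with hTr'def
  have hrange : LinearMap.range Tr' = Submodule.span R {π} := by
    apply le_antisymm
    · rintro r ⟨⟨y, hy⟩, rfl⟩
      have hy' : y ∈ Ideal.span {πS} := hy
      obtain ⟨c, hc⟩ := Ideal.mem_span_singleton'.mp hy'
      show Algebra.trace R S y ∈ _
      rw [← hc, show c * πS = π • c from by rw [Algebra.smul_def, hπS]; ring, map_smul]
      exact Submodule.mem_span_singleton.mpr
        ⟨Algebra.trace R S c, by rw [smul_eq_mul, smul_eq_mul, mul_comm]⟩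
    · rw [Submodule.span_le, Set.singleton_subset_iff]
      have hmem : π • y₀ ∈ Ideal.span {πS} :=
        Ideal.mem_span_singleton'.mpr ⟨y₀, by rw [Algebra.smul_def, hπS]; ring⟩
      exact LinearMap.mem_range.mpr
        ⟨⟨π • y₀, hmem⟩,
          by rw [LinearMap.domRestrict_apply, map_smul, hy₀, smul_eq_mul, mul_one]⟩
  have hcardJ : Nat.card J = q ^ (n * (ℓ - 1)) := by
    rw [← hcardSpanS]
    exact Nat.card_congr ⟨fun x => ⟨x.1, x.2⟩, fun x => ⟨x.1, x.2⟩,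
      fun _ => rfl, fun _ => rfl⟩
  have hcardRange : Nat.card (LinearMap.range Tr') = q ^ (ℓ - 1) := by
    rw [hrange]
    exact hcardSpanR
  have e2 : Nat.card J =
      Nat.card (LinearMap.ker Tr') * Nat.card (LinearMap.range Tr') := by
    rw [Submodule.card_eq_card_quotient_mul_card (LinearMap.ker Tr')]
    congr 1
    exact Nat.card_congr (LinearMap.quotKerEquivRange Tr').toEquiv
  have hexp2 : (n - 1) * (ℓ - 1) + (ℓ - 1) = n * (ℓ - 1) := by
    cases n with
    | zero => omega
    | succ m => simp [Nat.succ_sub_one, Nat.succ_mul]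
  have hkerT' : Nat.card (LinearMap.ker Tr') = q ^ ((n - 1) * (ℓ - 1)) := by
    have hl1 : 0 < q ^ (ℓ - 1) := Nat.pow_pos hq0
    apply Nat.eq_of_mul_eq_mul_right hl1
    calc Nat.card (LinearMap.ker Tr') * q ^ (ℓ - 1)
        = Nat.card (LinearMap.ker Tr') * Nat.card (LinearMap.range Tr') := by rw [hcardRange]
      _ = Nat.card J := e2.symm
      _ = q ^ (n * (ℓ - 1)) := hcardJ
      _ = q ^ ((n - 1) * (ℓ - 1) + (ℓ - 1)) := by rw [hexp2]
      _ = q ^ ((n - 1) * (ℓ - 1)) * q ^ (ℓ - 1) := pow_add q _ _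
  -- sets of trace-zero elements
  have hM : Nat.card {y : S // Algebra.trace R S y = 0 ∧ ¬ IsUnit y} =
      q ^ ((n - 1) * (ℓ - 1)) := by
    rw [← hkerT']
    apply Nat.card_congr
    refine
      { toFun := fun y => ⟨⟨y.1, (hnonunit_iff y.1).mp y.2.2⟩,
          LinearMap.mem_ker.mpr y.2.1⟩
        invFun := fun z => ⟨z.1.1,
          ⟨LinearMap.mem_ker.mp z.2, (hnonunit_iff z.1.1).mpr z.1.2⟩⟩
        left_inv := fun y => rfl
        right_inv := fun z => by ext; rfl }
  have hT : Nat.card {y : S // Algebra.trace R S y = 0} = q ^ ((n - 1) * ℓ) := by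
    rw [← hkcard]
    apply Nat.card_congr
    exact
      { toFun := fun y => ⟨y.1, LinearMap.mem_ker.mpr y.2⟩
        invFun := fun z => ⟨z.1, LinearMap.mem_ker.mp z.2⟩
        left_inv := fun _ => rfl
        right_inv := fun _ => rfl }
  have hsplit : Nat.card {y : S // Algebra.trace R S y = 0 ∧ IsUnit y} +
      Nat.card {y : S // Algebra.trace R S y = 0 ∧ ¬ IsUnit y} =
      Nat.card {y : S // Algebra.trace R S y = 0} := by
    simp only [Nat.card_eq_fintype_card]
    rw [Fintype.card_subtype, Fintype.card_subtype, Fintype.card_subtype]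
    rw [← Finset.filter_filter, ← Finset.filter_filter]
    exact Finset.card_filter_add_card_filter_not (fun y => IsUnit y)
  have hthird' : Nat.card {y : S // Algebra.trace R S y = 0 ∧ IsUnit y} =
      q ^ ((n - 1) * ℓ) - q ^ ((n - 1) * (ℓ - 1)) := by
    rw [hM, hT] at hsplit
    omega
  have hthird : Nat.card {y : Sˣ // Algebra.trace R S (y : S) = 0} =
      q ^ ((n - 1) * ℓ) - q ^ ((n - 1) * (ℓ - 1)) := by
    rw [← hthird']
    apply Nat.card_congr
    refine
      { toFun := fun y => ⟨(y.1 : S), y.2, y.1.isUnit⟩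
        invFun := fun y => ⟨y.2.2.unit, by rw [IsUnit.unit_spec]; exact y.2.1⟩
        left_inv := fun y => by
          apply Subtype.ext
          apply Units.ext
          simp
        right_inv := fun y => by
          apply Subtype.ext
          simp }
  exact ⟨hfirst, hunit, hthird⟩
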